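/- Let g(z) = 1 − (z + 1/z) + (log z)(z − 1/z) for z > 0. Then g has a unique critical point at z = 1 with g(1) = −1, lim_{z↓0} g(z) = ∞ and lim_{z→∞} g(z) = ∞, and g has exactly two roots 0 < z₀ < 1 < z₁ on (0,∞), with g < 0 exactly on (z₀, z₁). -/

import Mathlib

open Filter Real Set Topology

noncomputable def fG : ℝ → ℝ := fun z => 1 - (z + 1 / z) + Real.log z * (z - 1 / z)

lemma fG_hasDerivAt {z : ℝ} (hz : 0 < z) :
    HasDerivAt fG (Real.log z * (1 + 1 / z ^ 2)) z := by
  have hz' : z ≠ 0 := hz.ne'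
  have h1 : HasDerivAt (fun z : ℝ => 1 - (z + 1 / z)) (-(1 + -(z^2)⁻¹)) z := by
    have := ((hasDerivAt_id z).add (hasDerivAt_inv hz')).const_sub 1
    simpa [one_div] using this
  have h2 : HasDerivAt (fun z : ℝ => Real.log z * (z - 1 / z))
      (z⁻¹ * (z - 1/z) + Real.log z * (1 - -(z^2)⁻¹)) z := by
    have hsub : HasDerivAt (fun z : ℝ => z - 1 / z) (1 - -(z^2)⁻¹) z := by
      have := (hasDerivAt_id' z).sub (hasDerivAt_inv hz')
      simpa [one_div, Pi.sub_def] using this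
    exact (Real.hasDerivAt_log hz').mul hsub
  have := h1.fun_add h2
  refine this.congr_deriv ?_
  field_simp
  ring

lemma fG_one : fG 1 = -1 := by simp [fG]

lemma fG_deriv {z : ℝ} (hz : 0 < z) : deriv fG z = Real.log z * (1 + 1 / z ^ 2) :=
  (fG_hasDerivAt hz).deriv

lemma fG_tendsto_zero : Tendsto fG (𝓝[>] (0:ℝ)) atTop := by
  have h1 : Tendsto (fun z : ℝ => 1 - z + Real.log z * z) (𝓝[>] (0:ℝ)) (𝓝 (1 - 0 + 0)) := by
    have hz : Tendsto (fun z : ℝ => z) (𝓝[>] (0:ℝ)) (𝓝 0) :=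
      tendsto_id.mono_left nhdsWithin_le_nhds
    have hlz : Tendsto (fun z : ℝ => Real.log z * z) (𝓝[>] (0:ℝ)) (𝓝 0) := by
      simpa using tendsto_log_mul_rpow_nhdsGT_zero (r := 1) one_pos
    exact (tendsto_const_nhds.sub hz).add hlz
  have h2 : Tendsto (fun z : ℝ => (-Real.log z - 1) * z⁻¹) (𝓝[>] (0:ℝ)) atTop := by
    have hneg : Tendsto (fun z : ℝ => -Real.log z - 1) (𝓝[>] (0:ℝ)) atTop := by
      have : Tendsto (fun z : ℝ => -Real.log z) (𝓝[>] (0:ℝ)) atTop :=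
        tendsto_neg_atBot_atTop.comp Real.tendsto_log_nhdsGT_zero
      exact tendsto_atTop_add_const_right _ (-1) this
    exact hneg.atTop_mul_atTop₀ tendsto_inv_nhdsGT_zero
  have h := h1.add_atTop h2
  refine h.congr' ?_
  filter_upwards [self_mem_nhdsWithin] with z hz
  have hz0 : (z:ℝ) ≠ 0 := (Set.mem_Ioi.mp hz).ne'
  simp only [fG]
  field_simp
  ring

lemma fG_tendsto_atTop : Tendsto fG atTop atTop := by
  have h1 : Tendsto (fun z : ℝ => z * (Real.log z - 1)) atTop atTop := by
    refine tendsto_id.atTop_mul_atTop₀ ?_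
    exact tendsto_atTop_add_const_right _ (-1) Real.tendsto_log_atTop
  have h2 : Tendsto (fun z : ℝ => 1 - z⁻¹ - Real.log z / z) atTop (𝓝 (1 - 0 - 0)) := by
    have hlo : Tendsto (fun z : ℝ => Real.log z / z) atTop (𝓝 0) :=
      Real.isLittleO_log_id_atTop.tendsto_div_nhds_zero
    exact (tendsto_const_nhds.sub tendsto_inv_atTop_zero).sub hlo
  have h := h1.atTop_add h2
  refine h.congr' ?_
  filter_upwards [eventually_gt_atTop (0:ℝ)] with z hz
  have hz0 : (z:ℝ) ≠ 0 := hz.ne'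
  simp only [fG]
  field_simp
  ring

lemma fG_anti : StrictAntiOn fG (Set.Ioc 0 1) := by
  refine strictAntiOn_of_deriv_neg (convex_Ioc 0 1) ?_ ?_
  · exact fun z hz => ((fG_hasDerivAt hz.1).continuousAt).continuousWithinAt
  · intro x hx
    rw [interior_Ioc] at hx
    rw [fG_deriv hx.1]
    exact mul_neg_of_neg_of_pos (Real.log_neg hx.1 hx.2) (by positivity)

lemma fG_mono : StrictMonoOn fG (Set.Ici 1) := by
  refine strictMonoOn_of_deriv_pos (convex_Ici 1) ?_ ?_
  · exact fun z hz => ((fG_hasDerivAt (lt_of_lt_of_le one_pos hz)).continuousAt).continuousWithinAt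
  · intro x hx
    rw [interior_Ici] at hx
    rw [fG_deriv (lt_trans one_pos hx)]
    exact mul_pos (Real.log_pos hx) (by positivity)

theorem exceedance_g_properties
    (g : ℝ → ℝ)
    (hg : ∀ z : ℝ, g z = 1 - (z + 1 / z) + Real.log z * (z - 1 / z)) :
    g 1 = -1 ∧
    (∀ z : ℝ, 0 < z → (deriv g z = 0 ↔ z = 1)) ∧
    Filter.Tendsto g (nhdsWithin 0 (Set.Ioi 0)) atTop ∧
    Filter.Tendsto g atTop atTop ∧
    ∃ z₀ z₁ : ℝ, 0 < z₀ ∧ z₀ < 1 ∧ 1 < z₁ ∧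
      {z : ℝ | 0 < z ∧ g z = 0} = {z₀, z₁} ∧
      (∀ z : ℝ, 0 < z → (g z < 0 ↔ z ∈ Set.Ioo z₀ z₁)) := by
  have hfg : g = fG := funext hg
  subst hfg
  refine ⟨fG_one, ?_, fG_tendsto_zero, fG_tendsto_atTop, ?_⟩
  · intro z hz
    rw [fG_deriv hz]
    constructor
    · intro h
      rcases mul_eq_zero.mp h with h | h
      · rcases Real.log_eq_zero.mp h with h | h | h
        · exact absurd h hz.ne'
        · exact h
        · exact absurd h (by nlinarith)
      · nlinarith [sq_nonneg z, div_pos one_pos (pow_pos hz 2)]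
    · rintro rfl; simp
  · -- roots
    obtain ⟨b, hb1, hb2⟩ := (fG_tendsto_atTop.eventually_ge_atTop 1).and
      (eventually_ge_atTop (2:ℝ)) |>.exists
    obtain ⟨a, ha1, ha2⟩ := (fG_tendsto_zero.eventually_ge_atTop 1).and
      (Filter.eventually_mem_set.mpr (Ioo_mem_nhdsGT_of_mem ⟨le_refl 0, one_pos⟩)) |>.exists
    have hb1' : (1:ℝ) ≤ b := by linarith
    have hcontIcc : ∀ {s t : ℝ}, 0 < s → ContinuousOn fG (Icc s t) := by
      intro s t hs
      exact fun z hz => ((fG_hasDerivAt (lt_of_lt_of_le hs hz.1)).continuousAt).continuousWithinAt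
    -- root z₁ in (1, b]
    obtain ⟨z₁, hz₁mem, hz₁⟩ : ∃ z₁ ∈ Icc (1:ℝ) b, fG z₁ = 0 := by
      have := intermediate_value_Icc hb1' (hcontIcc one_pos)
      have h0 : (0:ℝ) ∈ Icc (fG 1) (fG b) := by
        rw [fG_one]; exact ⟨by norm_num, by linarith⟩
      obtain ⟨z, hz, hfz⟩ := this h0
      exact ⟨z, hz, hfz⟩
    -- root z₀ in [a, 1)
    obtain ⟨z₀, hz₀mem, hz₀⟩ : ∃ z₀ ∈ Icc a (1:ℝ), fG z₀ = 0 := by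
      have := intermediate_value_Icc' ha2.2.le (hcontIcc ha2.1)
      have h0 : (0:ℝ) ∈ Icc (fG 1) (fG a) := by
        rw [fG_one]; exact ⟨by norm_num, by linarith⟩
      obtain ⟨z, hz, hfz⟩ := this h0
      exact ⟨z, hz, hfz⟩
    have hz₀pos : 0 < z₀ := lt_of_lt_of_le ha2.1 hz₀mem.1
    have hz₀lt : z₀ < 1 := lt_of_le_of_ne hz₀mem.2 (by
      intro h; rw [h, fG_one] at hz₀; norm_num at hz₀)
    have hz₁gt : 1 < z₁ := lt_of_le_of_ne hz₁mem.1 (by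
      intro h; rw [← h, fG_one] at hz₁; norm_num at hz₁)
    have hz₀Ioc : z₀ ∈ Ioc (0:ℝ) 1 := ⟨hz₀pos, hz₀lt.le⟩
    have hz₁Ici : z₁ ∈ Ici (1:ℝ) := hz₁gt.le
    refine ⟨z₀, z₁, hz₀pos, hz₀lt, hz₁gt, ?_, ?_⟩
    · ext z
      simp only [Set.mem_setOf_eq, Set.mem_insert_iff, Set.mem_singleton_iff]
      constructor
      · rintro ⟨hzpos, hroot⟩
        rcases lt_trichotomy z 1 with h | h | h
        · left
          exact fG_anti.injOn ⟨hzpos, h.le⟩ hz₀Ioc (by rw [hroot, hz₀])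
        · exfalso; rw [h, fG_one] at hroot; norm_num at hroot
        · right
          exact fG_mono.injOn (Set.mem_Ici.mpr h.le) hz₁Ici (by rw [hroot, hz₁])
      · rintro (rfl | rfl)
        · exact ⟨hz₀pos, hz₀⟩
        · exact ⟨lt_trans one_pos hz₁gt, hz₁⟩
    · intro z hzpos
      constructor
      · intro hneg
        constructor
        · by_contra h
          push_neg at h
          have hle : fG z₀ ≤ fG z :=
            fG_anti.antitoneOn ⟨hzpos, le_trans h hz₀lt.le⟩ hz₀Ioc h
          rw [hz₀] at hle; linarith
        · by_contra h
          push_neg at h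
          have hle : fG z₁ ≤ fG z :=
            fG_mono.monotoneOn hz₁Ici (Set.mem_Ici.mpr (le_trans hz₁gt.le h)) h
          rw [hz₁] at hle; linarith
      · rintro ⟨h1, h2⟩
        rcases le_total z 1 with h | h
        · have := fG_anti hz₀Ioc ⟨hzpos, h⟩ h1
          rw [hz₀] at this; linarith
        · have := fG_mono (Set.mem_Ici.mpr h) (Set.mem_Ici.mpr (le_trans h (le_of_lt h2))) h2
          rw [hz₁] at this; linarith
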